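/- Let F: ℝⁿ ⇉ ℝᵐ have closed graph, let h: ℝⁿ → ℝᵐ be Lipschitz continuous around u and strictly differentiable at u with derivative ∇h(u), and let (u,v) ∈ gph(F+h). Then N̄_{gph(h+F)}(u,v) = { (u*,v*) ∈ ℝⁿ × ℝᵐ : (u* + ∇h(u)ᵀv*, v*) ∈ N̄_{gph F}(u, v−h(u)) }. -/

import Mathlib

open Filter Topology Set ENNReal NNReal

noncomputable section

variable {E Y : Type*} [NormedAddCommGroup E] [NormedSpace ℝ E]
  [NormedAddCommGroup Y] [NormedSpace ℝ Y]

/-- The tangent (Bouligand) cone to `A` at `x`: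
`T_A(x) := {u : ∃ uᵢ → u, tᵢ ↓ 0 with x + tᵢ uᵢ ∈ A}`. -/
def tangentConeB (A : Set E) (x : E) : Set E :=
  {u | ∃ (t : ℕ → ℝ) (c : ℕ → E), (∀ i, 0 < t i) ∧ Tendsto t atTop (𝓝 0) ∧
    Tendsto c atTop (𝓝 u) ∧ ∀ i, x + t i • c i ∈ A}

/-- The Fréchet normal cone to `A` at `x` (empty outside `A`):
the polar of the tangent cone. -/
def frechetNC (A : Set E) (x : E) : Set (E →L[ℝ] ℝ) :=
  {p | x ∈ A ∧ ∀ u ∈ tangentConeB A x, p u ≤ 0}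

/-- The limiting normal cone to `A` at `x`. -/
def limitingNC (A : Set E) (x : E) : Set (E →L[ℝ] ℝ) :=
  {p | ∃ (xs : ℕ → E) (ps : ℕ → E →L[ℝ] ℝ),
    Tendsto xs atTop (𝓝 x) ∧ Tendsto ps atTop (𝓝 p) ∧
    ∀ i, ps i ∈ frechetNC A (xs i)}

/-- The directional limiting normal cone to `A` at `x` in the direction `u`. -/
def dirLimitingNC (A : Set E) (x u : E) : Set (E →L[ℝ] ℝ) :=
  {p | ∃ (t : ℕ → ℝ) (us : ℕ → E) (ps : ℕ → (E →L[ℝ] ℝ)),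
    (∀ i, 0 < t i) ∧ Tendsto t atTop (𝓝 0) ∧ Tendsto us atTop (𝓝 u) ∧
    Tendsto ps atTop (𝓝 p) ∧ ∀ i, ps i ∈ frechetNC A (x + t i • us i)}

/-- `A` is directionally regular at `x` in the direction `u`. -/
def DirRegularAt (A : Set E) (x u : E) : Prop :=
  dirLimitingNC A x u =
    {p | ∀ (t : ℕ → ℝ), (∀ i, 0 < t i) → Tendsto t atTop (𝓝 0) →
      ∃ (us : ℕ → E) (ps : ℕ → (E →L[ℝ] ℝ)), Tendsto us atTop (𝓝 u) ∧
        Tendsto ps atTop (𝓝 p) ∧ ∀ i, ps i ∈ frechetNC A (x + t i • us i)}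

/-- `A` is directionally regular at `x` (in all directions). -/
def DirRegular (A : Set E) (x : E) : Prop := ∀ u, DirRegularAt A x u

/-- The pair `(u*, v*)` viewed as a linear functional on `E × Y`. -/
def pairFun (us : E →L[ℝ] ℝ) (vs : Y →L[ℝ] ℝ) : (E × Y) →L[ℝ] ℝ :=
  us.coprod vs

/-- The primal-dual derivative of the mapping with graph `G` at `z ∈ G`:
`D̂F(xb,yb)(u,v*) := {(u*,v) : (u*,−v*) ∈ N̄_{gph F}((xb,yb);(u,v))}`. -/
def pdDeriv (G : Set (E × Y)) (z : E × Y) (u : E) (vs : Y →L[ℝ] ℝ) :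
    Set ((E →L[ℝ] ℝ) × Y) :=
  {w | pairFun w.1 (-vs) ∈ dirLimitingNC G z (u, w.2)}

/-- `rg[F](xb,yb)`. -/
def rgL (G : Set (E × Y)) (z : E × Y) : ℝ≥0∞ :=
  ⨅ (u : E) (vs : Y →L[ℝ] ℝ) (w : (E →L[ℝ] ℝ) × Y) (_ : ‖u‖ = 1)
    (_ : ‖vs‖ = 1) (_ : w ∈ pdDeriv G z u vs),
    ENNReal.ofReal (max ‖w.1‖ ‖w.2‖)

/-- `rg⋄[F](xb,yb)`. -/
def rgDiamond (G : Set (E × Y)) (z : E × Y) : ℝ≥0∞ :=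
  ⨅ (u : E) (vs : Y →L[ℝ] ℝ) (w : (E →L[ℝ] ℝ) × Y) (_ : ‖u‖ = 1)
    (_ : ‖vs‖ = 1) (_ : w ∈ pdDeriv G z u vs) (_ : w.1 u = vs w.2),
    ENNReal.ofReal (max ‖w.1‖ ‖w.2‖)

/-- `rg°[F](xb,yb)`. -/
def rgCirc (G : Set (E × Y)) (z : E × Y) : ℝ≥0∞ :=
  ⨅ (u : E) (vs : Y →L[ℝ] ℝ) (B : E →L[ℝ] Y) (_ : ‖u‖ = 1) (_ : ‖vs‖ = 1)
    (_ : (vs.comp B, B u) ∈ pdDeriv G z u vs),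
    ENNReal.ofReal ‖B‖

/-- `r̂g[F](xb,yb)`. -/
def rgHat (G : Set (E × Y)) (z : E × Y) : ℝ≥0∞ :=
  ⨅ (u : E) (vs : Y →L[ℝ] ℝ) (w : (E →L[ℝ] ℝ) × Y) (_ : ‖u‖ = 1)
    (_ : ‖vs‖ = 1) (_ : w ∈ pdDeriv G z u vs),
    ENNReal.ofReal (‖w.1‖ + ‖w.2‖)

/-- `rg†[F](xb,yb)` (intended for the Euclidean setting). -/
def rgDagger (G : Set (E × Y)) (z : E × Y) : ℝ≥0∞ :=
  ⨅ (u : E) (vs : Y →L[ℝ] ℝ) (w : (E →L[ℝ] ℝ) × Y) (_ : ‖u‖ = 1)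
    (_ : ‖vs‖ = 1) (_ : w ∈ pdDeriv G z u vs) (_ : w.1 u = vs w.2),
    ENNReal.ofReal (Real.sqrt (‖w.1‖ ^ 2 + ‖w.2‖ ^ 2 - (w.1 u) ^ 2))

/-- Metric subregularity at `xb` for `yb` of the mapping with graph `G`. -/
def MetricSubregAt (G : Set (E × Y)) (xb : E) (yb : Y) : Prop :=
  (xb, yb) ∈ G ∧ ∃ κ : ℝ≥0, ∃ U ∈ 𝓝 xb, ∀ x ∈ U,
    EMetric.infEdist x {x' | (x', yb) ∈ G} ≤
      (κ : ℝ≥0∞) * EMetric.infEdist yb {y | (x, y) ∈ G}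

/-- The graph of `F + h`, where `G` is the graph of `F`. -/
def sumGraph (G : Set (E × Y)) (h : E → Y) : Set (E × Y) :=
  {p | (p.1, p.2 - h p.1) ∈ G}

/-- `h` is Lipschitz continuous around `xb`. -/
def LipschitzAround (h : E → Y) (xb : E) : Prop :=
  ∃ K : ℝ≥0, ∃ U ∈ 𝓝 xb, LipschitzOnWith K h U

/-- The Lipschitz modulus `lip(h;xb)`. -/
def lipMod (h : E → Y) (xb : E) : ℝ≥0∞ :=
  Filter.limsup (fun p : E × E => ENNReal.ofReal (‖h p.1 - h p.2‖ / ‖p.1 - p.2‖))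
    ((𝓝 xb ×ˢ 𝓝 xb) ⊓ 𝓟 {p : E × E | p.1 ≠ p.2})

/-- The radius of metric subregularity w.r.t. Lipschitz perturbations. -/
def radLip (G : Set (E × Y)) (xb : E) (yb : Y) : ℝ≥0∞ :=
  ⨅ (h : E → Y) (_ : LipschitzAround h xb) (_ : h xb = 0)
    (_ : ¬ MetricSubregAt (sumGraph G h) xb yb), lipMod h xb

/-- The Clarke generalized Jacobian of `h` at `x`. -/
def clarkeJac (h : E → Y) (x : E) : Set (E →L[ℝ] Y) :=
  convexHull ℝ {B | ∃ xs : ℕ → E, Tendsto xs atTop (𝓝 x) ∧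
    (∀ i, DifferentiableAt ℝ h (xs i)) ∧
    Tendsto (fun i => fderiv ℝ h (xs i)) atTop (𝓝 B)}

/-- `h` is semismooth at `xb`. -/
def SemismoothAt (h : E → Y) (xb : E) : Prop :=
  LipschitzAround h xb ∧
  ∀ u : E, ∃ L : Y, ∀ (t : ℕ → ℝ) (us : ℕ → E) (V : ℕ → E →L[ℝ] Y),
    (∀ i, 0 < t i) → Tendsto t atTop (𝓝 0) → Tendsto us atTop (𝓝 u) →
    (∀ i, V i ∈ clarkeJac h (xb + t i • us i)) →
    Tendsto (fun i => V i (us i)) atTop (𝓝 L)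

/-- `h` is continuously differentiable around `xb`. -/
def C1Around (h : E → Y) (xb : E) : Prop :=
  ∃ U ∈ 𝓝 xb, ContDiffOn ℝ 1 h U

/-- The radius of metric subregularity w.r.t. semismooth perturbations. -/
def radSS (G : Set (E × Y)) (xb : E) (yb : Y) : ℝ≥0∞ :=
  ⨅ (h : E → Y) (_ : SemismoothAt h xb) (_ : h xb = 0)
    (_ : ¬ MetricSubregAt (sumGraph G h) xb yb), lipMod h xb

/-- The radius of metric subregularity w.r.t. `C¹` perturbations. -/
def radC1 (G : Set (E × Y)) (xb : E) (yb : Y) : ℝ≥0∞ :=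
  ⨅ (h : E → Y) (_ : C1Around h xb) (_ : h xb = 0)
    (_ : ¬ MetricSubregAt (sumGraph G h) xb yb), lipMod h xb


section Aux

variable {Z : Type*} [NormedAddCommGroup Z] [NormedSpace ℝ Z]

lemma tangentConeB_smul {A : Set Z} {x w : Z} {s : ℝ} (hs : 0 < s)
    (hw : w ∈ tangentConeB A x) : s • w ∈ tangentConeB A x := by
  obtain ⟨t, c, htpos, ht0, hc, hmem⟩ := hw
  refine ⟨fun i => t i / s, fun i => s • c i, fun i => div_pos (htpos i) hs,
    by simpa using ht0.div_const s, hc.const_smul s, fun i => ?_⟩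
  have : (t i / s) • (s • c i) = t i • c i := by
    rw [smul_smul, div_mul_cancel₀ _ hs.ne']
  rw [this]; exact hmem i

/-- From a polar-type `ε`-estimate on the tangent cone, deduce a pointwise local estimate. -/
lemma eps_pointwise [FiniteDimensional ℝ Z] {A : Set Z} {x : Z} {p : Z →L[ℝ] ℝ} {ε δ : ℝ}
    (hε : 0 ≤ ε) (hδ : 0 < δ) (htan : ∀ w ∈ tangentConeB A x, p w ≤ ε * ‖w‖) :
    ∃ r > 0, ∀ x' ∈ A, ‖x' - x‖ ≤ r → p (x' - x) ≤ (ε + δ) * ‖x' - x‖ := by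
  by_contra hcon
  push_neg at hcon
  have hex : ∀ j : ℕ, ∃ x', x' ∈ A ∧ ‖x' - x‖ ≤ 1 / (j + 1) ∧
      (ε + δ) * ‖x' - x‖ < p (x' - x) := by
    intro j
    obtain ⟨x', h1, h2, h3⟩ := hcon (1 / (j + 1)) (by positivity)
    exact ⟨x', h1, h2, h3⟩
  choose xs hxsA hxsn hxsp using hex
  have htne : ∀ j, (0:ℝ) < ‖xs j - x‖ := by
    intro j
    rcases (norm_nonneg (xs j - x)).eq_or_lt with h | h
    · exfalso
      have h0 : xs j - x = 0 := by rw [← norm_eq_zero]; exact h.symm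
      have := hxsp j
      rw [h0] at this
      simp at this
    · exact h
  set w : ℕ → Z := fun j => ‖xs j - x‖⁻¹ • (xs j - x) with hwdef
  have hwmem : ∀ j, w j ∈ Metric.closedBall (0:Z) 1 := by
    intro j
    rw [Metric.mem_closedBall, dist_zero_right, norm_smul, norm_inv, norm_norm]
    rw [inv_mul_cancel₀ (htne j).ne']
  obtain ⟨wl, hwl, φ, hφ, hwtend⟩ :=
    (isCompact_closedBall (0:Z) 1).tendsto_subseq hwmem
  have htt : Tendsto (fun k => ‖xs (φ k) - x‖) atTop (𝓝 0) := by
    apply squeeze_zero (fun k => (htne _).le) (fun k => (hxsn (φ k)).trans ?_)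
    · exact tendsto_one_div_add_atTop_nhds_zero_nat
    · have hk : k ≤ φ k := hφ.le_apply
      have hc2 : (k:ℝ) + 1 ≤ (φ k : ℝ) + 1 := by
        have : (k:ℝ) ≤ (φ k : ℝ) := Nat.cast_le.mpr hk
        linarith
      exact one_div_le_one_div_of_le (by positivity) hc2
  have hwtan : wl ∈ tangentConeB A x := by
    refine ⟨fun k => ‖xs (φ k) - x‖, fun k => w (φ k), fun k => htne _, htt, hwtend, fun k => ?_⟩
    have : ‖xs (φ k) - x‖ • w (φ k) = xs (φ k) - x := by
      rw [hwdef]; rw [smul_smul, mul_inv_cancel₀ (htne _).ne', one_smul]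
    rw [this, add_sub_cancel]
    exact hxsA _
  have hple : ε + δ ≤ p wl := by
    have h1 : Tendsto (fun k => p (w (φ k))) atTop (𝓝 (p wl)) :=
      (p.continuous.tendsto wl).comp hwtend
    refine le_of_tendsto_of_tendsto' tendsto_const_nhds h1 (fun k => ?_)
    have hlt := hxsp (φ k)
    have : p (w (φ k)) = ‖xs (φ k) - x‖⁻¹ * p (xs (φ k) - x) := by
      rw [hwdef]; simp [map_smul]
    rw [this]
    rw [le_inv_mul_iff₀ (htne _)]
    calc ‖xs (φ k) - x‖ * (ε + δ) = (ε + δ) * ‖xs (φ k) - x‖ := mul_comm _ _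
      _ ≤ p (xs (φ k) - x) := hlt.le
  have hwle : ‖wl‖ ≤ 1 := by
    rw [Metric.mem_closedBall, dist_zero_right] at hwl; exact hwl
  have := htan wl hwtan
  nlinarith [hple, this, hwle, hε, hδ]

end Aux
section Aux2

variable {Z : Type*} [NormedAddCommGroup Z] [NormedSpace ℝ Z]

/-- A constant (depending only on the space) controlling the equivalence between the
given norm and a Euclidean norm. -/
def euclC (Z : Type*) [NormedAddCommGroup Z] [NormedSpace ℝ Z] [FiniteDimensional ℝ Z] : ℝ :=
  2 * (‖(toEuclidean (E := Z) : Z →L[ℝ] EuclideanSpace ℝ (Fin (Module.finrank ℝ Z)))‖ + 1) *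
    (‖((toEuclidean (E := Z)).symm : EuclideanSpace ℝ (Fin (Module.finrank ℝ Z)) →L[ℝ] Z)‖ + 1)

-- Penalization: from an `ε`-pointwise estimate, produce a genuine Fréchet normal nearby.
set_option maxHeartbeats 1000000 in
lemma exists_frechet_near [FiniteDimensional ℝ Z] {A : Set Z} {x : Z} {p : Z →L[ℝ] ℝ}
    {ε r₀ : ℝ} (hx : x ∈ A) (hr : 0 < r₀) (hε : 0 < ε)
    (hcl : IsClosed (A ∩ Metric.closedBall x r₀))
    (hpt : ∀ x' ∈ A, ‖x' - x‖ ≤ r₀ → p (x' - x) ≤ ε * ‖x' - x‖) :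
    ∃ xh q, q ∈ frechetNC A xh ∧ ‖xh - x‖ ≤ r₀ ∧ ‖q - p‖ ≤ euclC Z * ε := by
  set n := Module.finrank ℝ Z with hn
  set Tl : Z →L[ℝ] EuclideanSpace ℝ (Fin n) :=
    (toEuclidean (E := Z) : Z →L[ℝ] EuclideanSpace ℝ (Fin n)) with hTl
  set Ts : EuclideanSpace ℝ (Fin n) →L[ℝ] Z :=
    ((toEuclidean (E := Z)).symm : EuclideanSpace ℝ (Fin n) →L[ℝ] Z) with hTs
  set Ct : ℝ := ‖Tl‖ + 1 with hCt
  set Cs : ℝ := ‖Ts‖ + 1 with hCs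
  have hCt0 : 0 < Ct := by positivity
  have hCs0 : 0 < Cs := by positivity
  have hlow : ∀ z : Z, ‖z‖ ≤ Cs * ‖Tl z‖ := by
    intro z
    have h1 : ‖Ts (Tl z)‖ ≤ ‖Ts‖ * ‖Tl z‖ := Ts.le_opNorm _
    have h2 : Ts (Tl z) = z := by
      simp [hTs, hTl]
    rw [h2] at h1
    have : ‖Ts‖ * ‖Tl z‖ ≤ Cs * ‖Tl z‖ :=
      mul_le_mul_of_nonneg_right (by simp [hCs]) (norm_nonneg _)
    linarith
  have hup : ∀ z : Z, ‖Tl z‖ ≤ Ct * ‖z‖ := by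
    intro z
    have h1 : ‖Tl z‖ ≤ ‖Tl‖ * ‖z‖ := Tl.le_opNorm _
    have : ‖Tl‖ * ‖z‖ ≤ Ct * ‖z‖ :=
      mul_le_mul_of_nonneg_right (by simp [hCt]) (norm_nonneg _)
    linarith
  set ρ : ℝ := r₀ / (2 * ε * Cs ^ 2) with hρdef
  have hρ : 0 < ρ := by positivity
  set S : Set Z := A ∩ Metric.closedBall x r₀ with hS
  have hScomp : IsCompact S :=
    (isCompact_closedBall x r₀).of_isClosed_subset hcl inter_subset_right
  have hSne : S.Nonempty := ⟨x, hx, by simp [Metric.mem_closedBall, hr.le]⟩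
  set f : Z → ℝ := fun z => -p (z - x) + ρ⁻¹ * ‖Tl (z - x)‖ ^ 2 with hf
  have hfcont : Continuous f := by
    apply Continuous.add
    · exact (p.continuous.comp (continuous_id.sub continuous_const)).neg
    · exact continuous_const.mul
        (((Tl.continuous.comp (continuous_id.sub continuous_const)).norm).pow 2)
  obtain ⟨xh, hxhS, hmin⟩ := hScomp.exists_isMinOn hSne hfcont.continuousOn
  have hmin' : ∀ y ∈ S, f xh ≤ f y := fun y hy => hmin hy
  have hfx : f x = 0 := by simp [hf]
  have hfxh : f xh ≤ 0 := by
    have := hmin' x ⟨hx, by simp [Metric.mem_closedBall, hr.le]⟩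
    linarith [hfx ▸ this]
  have hxhr : ‖xh - x‖ ≤ r₀ := by
    have := hxhS.2
    rwa [Metric.mem_closedBall, dist_eq_norm] at this
  have key1 : ρ⁻¹ * ‖Tl (xh - x)‖ ^ 2 ≤ p (xh - x) := by
    have : -p (xh - x) + ρ⁻¹ * ‖Tl (xh - x)‖ ^ 2 ≤ 0 := hfxh
    linarith
  have key2 : p (xh - x) ≤ ε * ‖xh - x‖ := hpt xh hxhS.1 hxhr
  set N : ℝ := ‖Tl (xh - x)‖ with hN
  have hN0 : 0 ≤ N := norm_nonneg _
  have key3 : N ≤ ρ * (ε * Cs) := by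
    have hchain : ρ⁻¹ * N ^ 2 ≤ ε * (Cs * N) := by
      calc ρ⁻¹ * N ^ 2 ≤ p (xh - x) := key1
        _ ≤ ε * ‖xh - x‖ := key2
        _ ≤ ε * (Cs * N) := mul_le_mul_of_nonneg_left (hlow _) hε.le
    have h2 : N ^ 2 ≤ ρ * (ε * Cs) * N := by
      have := mul_le_mul_of_nonneg_left hchain hρ.le
      rw [← mul_assoc, mul_inv_cancel₀ hρ.ne', one_mul] at this
      calc N ^ 2 ≤ ρ * (ε * (Cs * N)) := this
        _ = ρ * (ε * Cs) * N := by ring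
    rcases hN0.eq_or_lt with h | h
    · rw [← h]; positivity
    · have : N * N ≤ ρ * (ε * Cs) * N := by rw [← pow_two N]; exact h2
      exact le_of_mul_le_mul_right this h
  have key4 : ‖xh - x‖ ≤ r₀ / 2 := by
    have h1 : ‖xh - x‖ ≤ Cs * N := hlow _
    have h2 : Cs * N ≤ Cs * (ρ * (ε * Cs)) := mul_le_mul_of_nonneg_left key3 hCs0.le
    have h3 : Cs * (ρ * (ε * Cs)) = r₀ / 2 := by
      rw [hρdef]; field_simp
    calc ‖xh - x‖ ≤ Cs * N := h1
      _ ≤ Cs * (ρ * (ε * Cs)) := h2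
      _ = r₀ / 2 := h3
  set Bf : Z →L[ℝ] ℝ := ((innerSL ℝ (Tl (xh - x))).comp Tl : Z →L[ℝ] ℝ) with hBf
  set q : Z →L[ℝ] ℝ := p - (2 * ρ⁻¹) • Bf with hq
  refine ⟨xh, q, ⟨hxhS.1, ?_⟩, hxhr, ?_⟩
  · -- q is a Fréchet normal at xh
    intro w hw
    obtain ⟨t, c, htp, ht0, hc, hmem⟩ := hw
    have hsm : Tendsto (fun j => ‖t j • c j‖) atTop (𝓝 0) := by
      have : Tendsto (fun j => t j • c j) atTop (𝓝 ((0:ℝ) • w)) := ht0.smul hc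
      rw [zero_smul] at this
      simpa using this.norm
    have hev : ∀ᶠ j in atTop, ‖t j • c j‖ ≤ r₀ / 2 :=
      hsm.eventually (eventually_le_nhds (by positivity))
    have hkey : ∀ᶠ j in atTop,
        p (c j) - 2 * ρ⁻¹ * inner ℝ (Tl (xh - x)) (Tl (c j)) ≤ ρ⁻¹ * (t j * ‖Tl (c j)‖ ^ 2) := by
      filter_upwards [hev] with j hj
      have hball : xh + t j • c j ∈ Metric.closedBall x r₀ := by
        rw [Metric.mem_closedBall, dist_eq_norm]
        have : xh + t j • c j - x = (xh - x) + t j • c j := by abel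
        rw [this]
        calc ‖(xh - x) + t j • c j‖ ≤ ‖xh - x‖ + ‖t j • c j‖ := norm_add_le _ _
          _ ≤ r₀ / 2 + r₀ / 2 := add_le_add key4 hj
          _ = r₀ := by ring
      have raw : f xh ≤ f (xh + t j • c j) := hmin' _ ⟨hmem j, hball⟩
      have hsub : xh + t j • c j - x = (xh - x) + t j • c j := by abel
      have hnorm : ‖Tl (xh + t j • c j - x)‖ ^ 2
          = ‖Tl (xh - x)‖ ^ 2 + 2 * (t j * inner ℝ (Tl (xh - x)) (Tl (c j)))
            + (t j) ^ 2 * ‖Tl (c j)‖ ^ 2 := by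
        rw [hsub, map_add, map_smul, norm_add_sq_real, real_inner_smul_right, norm_smul,
          Real.norm_eq_abs, abs_of_pos (htp j), mul_pow]
      have hp' : p (xh + t j • c j - x) = p (xh - x) + t j * p (c j) := by
        rw [hsub, map_add, map_smul, smul_eq_mul]
      have raw' : -(p (xh - x)) + ρ⁻¹ * ‖Tl (xh - x)‖ ^ 2
          ≤ -(p (xh - x) + t j * p (c j))
            + ρ⁻¹ * (‖Tl (xh - x)‖ ^ 2 + 2 * (t j * inner ℝ (Tl (xh - x)) (Tl (c j)))
              + (t j) ^ 2 * ‖Tl (c j)‖ ^ 2) := by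
        have := raw
        simp only [hf] at this
        rw [hnorm, hp'] at this
        exact this
      have ht := htp j
      nlinarith [raw', ht]
    have hL : Tendsto (fun j => p (c j) - 2 * ρ⁻¹ * inner ℝ (Tl (xh - x)) (Tl (c j)))
        atTop (𝓝 (p w - 2 * ρ⁻¹ * inner ℝ (Tl (xh - x)) (Tl w))) := by
      refine Tendsto.sub ((p.continuous.tendsto w).comp hc) ?_
      exact tendsto_const_nhds.mul
        (tendsto_const_nhds.inner ((Tl.continuous.tendsto w).comp hc))
    have hR : Tendsto (fun j => ρ⁻¹ * (t j * ‖Tl (c j)‖ ^ 2)) atTop (𝓝 0) := by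
      have : Tendsto (fun j => t j * ‖Tl (c j)‖ ^ 2) atTop (𝓝 (0 * ‖Tl w‖ ^ 2)) :=
        ht0.mul ((((Tl.continuous.tendsto w).comp hc).norm).pow 2)
      rw [zero_mul] at this
      simpa using tendsto_const_nhds.mul this
    have hle := le_of_tendsto_of_tendsto hL hR hkey
    have hBfw : Bf w = inner ℝ (Tl (xh - x)) (Tl w) := rfl
    have hqw : q w = p w - 2 * ρ⁻¹ * inner ℝ (Tl (xh - x)) (Tl w) := by
      rw [hq, ContinuousLinearMap.sub_apply, ContinuousLinearMap.smul_apply, hBfw,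
        smul_eq_mul, mul_assoc]
    rw [hqw]
    simpa using hle
  · -- norm estimate
    have hqp : q - p = -((2 * ρ⁻¹) • Bf) := by
      rw [hq]; abel
    have hnrm : ‖q - p‖ = (2 * ρ⁻¹) * ‖Bf‖ := by
      rw [hqp, norm_neg]
      have := norm_smul (2 * ρ⁻¹) Bf
      rw [this, Real.norm_eq_abs, abs_of_pos (by positivity : (0:ℝ) < 2 * ρ⁻¹)]
    have hBfn : ‖Bf‖ ≤ N * ‖Tl‖ := by
      calc ‖Bf‖ ≤ ‖innerSL ℝ (Tl (xh - x))‖ * ‖Tl‖ := ContinuousLinearMap.opNorm_comp_le _ _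
        _ ≤ N * ‖Tl‖ := by
            rw [innerSL_apply_norm]
    have h1 : 2 * ρ⁻¹ * ‖Bf‖ ≤ 2 * ρ⁻¹ * (ρ * (ε * Cs) * Ct) := by
      apply mul_le_mul_of_nonneg_left _ (by positivity)
      calc ‖Bf‖ ≤ N * ‖Tl‖ := hBfn
        _ ≤ (ρ * (ε * Cs)) * Ct := by
            apply mul_le_mul key3 (by simp [hCt]) (norm_nonneg _) (by positivity)
    have hρρ : ρ⁻¹ * ρ = 1 := inv_mul_cancel₀ hρ.ne'
    have heq : euclC Z = 2 * Ct * Cs := by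
      rw [hCt, hCs, hTl, hTs]; rfl
    have h2 : 2 * ρ⁻¹ * (ρ * (ε * Cs) * Ct) = 2 * Ct * Cs * ε := by
      calc 2 * ρ⁻¹ * (ρ * (ε * Cs) * Ct) = (ρ⁻¹ * ρ) * (2 * ε * Cs * Ct) := by ring
        _ = 2 * ε * Cs * Ct := by rw [hρρ]; ring
        _ = 2 * Ct * Cs * ε := by ring
    rw [heq, hnrm]
    linarith
end Aux2
section Aux3

variable {Z : Type*} [NormedAddCommGroup Z] [NormedSpace ℝ Z]

lemma euclC_nonneg (Z : Type*) [NormedAddCommGroup Z] [NormedSpace ℝ Z]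
    [FiniteDimensional ℝ Z] : 0 ≤ euclC Z := by
  unfold euclC; positivity

lemma mem_limitingNC_of_eps [FiniteDimensional ℝ Z] {A : Set Z} {zb : Z}
    (hcl : ∃ r > 0, IsClosed (A ∩ Metric.closedBall zb r))
    {zs : ℕ → Z} {ps : ℕ → Z →L[ℝ] ℝ} {p : Z →L[ℝ] ℝ}
    (hmem : ∀ i, zs i ∈ A) (hz : Tendsto zs atTop (𝓝 zb)) (hp : Tendsto ps atTop (𝓝 p))
    (heps : ∀ δ : ℝ, 0 < δ →
      ∀ᶠ i in atTop, ∀ w ∈ tangentConeB A (zs i), ps i w ≤ δ * ‖w‖) :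
    p ∈ limitingNC A zb := by
  obtain ⟨r, hr, hclosed⟩ := hcl
  have main : ∀ k : ℕ, ∃ xh q, q ∈ frechetNC A xh ∧
      dist xh zb ≤ 2 * (1 / (k + 1)) ∧
      dist q p ≤ (2 * euclC Z + 1) * (1 / (k + 1)) := by
    intro k
    have hδ : (0:ℝ) < 1 / (k + 1) := by positivity
    obtain ⟨N1, hN1⟩ := eventually_atTop.mp (heps (1 / (k + 1)) hδ)
    obtain ⟨N2, hN2⟩ := (Metric.tendsto_atTop.mp hz) (min (r / 2) (1 / (k + 1)))
      (lt_min (half_pos hr) hδ)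
    obtain ⟨N3, hN3⟩ := (Metric.tendsto_atTop.mp hp) (1 / (k + 1)) hδ
    set i := max N1 (max N2 N3) with hi
    have hi1 := hN1 i (le_max_left _ _)
    have hi2 := hN2 i (le_trans (le_max_left _ _) (le_max_right _ _))
    have hi3 := hN3 i (le_trans (le_max_right _ _) (le_max_right _ _))
    obtain ⟨r₁, hr₁, hpt₁⟩ := eps_pointwise (le_of_lt hδ) hδ hi1
    set r₀ : ℝ := min r₁ (min (r / 2) (1 / (k + 1))) with hr₀def
    have hr₀ : 0 < r₀ := lt_min hr₁ (lt_min (half_pos hr) hδ)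
    have hr₀le1 : r₀ ≤ 1 / (k + 1) := le_trans (min_le_right _ _) (min_le_right _ _)
    have hr₀ler : r₀ ≤ r / 2 := le_trans (min_le_right _ _) (min_le_left _ _)
    have hcl' : IsClosed (A ∩ Metric.closedBall (zs i) r₀) := by
      have hsub : A ∩ Metric.closedBall (zs i) r₀
          = (A ∩ Metric.closedBall zb r) ∩ Metric.closedBall (zs i) r₀ := by
        ext y
        constructor
        · rintro ⟨hyA, hyb⟩
          refine ⟨⟨hyA, ?_⟩, hyb⟩
          rw [Metric.mem_closedBall] at hyb ⊢
          have hd : dist y zb ≤ dist y (zs i) + dist (zs i) zb := dist_triangle _ _ _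
          have h2 : dist (zs i) zb ≤ r / 2 := le_trans hi2.le (min_le_left _ _)
          linarith [le_trans hyb hr₀ler]
        · rintro ⟨⟨hyA, _⟩, hyb⟩
          exact ⟨hyA, hyb⟩
      rw [hsub]
      exact hclosed.inter Metric.isClosed_closedBall
    have hpt' : ∀ x' ∈ A, ‖x' - zs i‖ ≤ r₀ →
        (ps i) (x' - zs i) ≤ (2 * (1 / (k + 1))) * ‖x' - zs i‖ := by
      intro x' hx' hle
      have := hpt₁ x' hx' (hle.trans (min_le_left _ _))
      have heq : (1 / ((k:ℝ) + 1) + 1 / (k + 1)) * ‖x' - zs i‖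
          = (2 * (1 / (k + 1))) * ‖x' - zs i‖ := by ring
      linarith [heq ▸ this]
    obtain ⟨xh, q, hqfr, hxhd, hqd⟩ :=
      exists_frechet_near (hmem i) hr₀ (by positivity : (0:ℝ) < 2 * (1 / (k + 1)))
        hcl' hpt'
    refine ⟨xh, q, hqfr, ?_, ?_⟩
    · have h1 : dist xh (zs i) ≤ 1 / (k + 1) := by
        rw [dist_eq_norm]; exact hxhd.trans hr₀le1
      have h2 : dist (zs i) zb ≤ 1 / (k + 1) := le_trans hi2.le (min_le_right _ _)
      calc dist xh zb ≤ dist xh (zs i) + dist (zs i) zb := dist_triangle _ _ _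
        _ ≤ 1 / (k + 1) + 1 / (k + 1) := add_le_add h1 h2
        _ = 2 * (1 / (k + 1)) := by ring
    · have h1 : dist q (ps i) ≤ euclC Z * (2 * (1 / (k + 1))) := by
        rw [dist_eq_norm]; exact hqd
      have h2 : dist (ps i) p ≤ 1 / (k + 1) := hi3.le
      calc dist q p ≤ dist q (ps i) + dist (ps i) p := dist_triangle _ _ _
        _ ≤ euclC Z * (2 * (1 / (k + 1))) + 1 / (k + 1) := add_le_add h1 h2
        _ = (2 * euclC Z + 1) * (1 / (k + 1)) := by ring
  choose xs qs hfr hd1 hd2 using main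
  have hbase : Tendsto (fun k : ℕ => 1 / ((k:ℝ) + 1)) atTop (𝓝 0) :=
    tendsto_one_div_add_atTop_nhds_zero_nat
  have ht1 : Tendsto (fun k => dist (xs k) zb) atTop (𝓝 0) := by
    apply squeeze_zero (fun k => dist_nonneg) hd1
    have := hbase.const_mul (2:ℝ)
    simpa using this
  have ht2 : Tendsto (fun k => dist (qs k) p) atTop (𝓝 0) := by
    apply squeeze_zero (fun k => dist_nonneg) hd2
    have := hbase.const_mul (2 * euclC Z + 1)
    simpa using this
  exact ⟨xs, qs, tendsto_iff_dist_tendsto_zero.mpr ht1,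
    tendsto_iff_dist_tendsto_zero.mpr ht2, hfr⟩

end Aux3
section Main

/-- The linear shift map `(a, b) ↦ (a, Dh a + b)`. -/
def shiftMap (Dh : E →L[ℝ] Y) : (E × Y) →L[ℝ] (E × Y) :=
  (ContinuousLinearMap.fst ℝ E Y).prod
    (Dh.comp (ContinuousLinearMap.fst ℝ E Y) + ContinuousLinearMap.snd ℝ E Y)

lemma shiftMap_apply (Dh : E →L[ℝ] Y) (z : E × Y) :
    shiftMap Dh z = (z.1, Dh z.1 + z.2) := rfl

lemma pairFun_eq_comp (p : (E × Y) →L[ℝ] ℝ) (Dh : E →L[ℝ] Y) :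
    pairFun (p.comp (ContinuousLinearMap.inl ℝ E Y) +
        (p.comp (ContinuousLinearMap.inr ℝ E Y)).comp Dh)
      (p.comp (ContinuousLinearMap.inr ℝ E Y)) = p.comp (shiftMap Dh) := by
  apply ContinuousLinearMap.ext
  rintro ⟨a, b⟩
  have hsplit : ((a, Dh a + b) : E × Y) = (a, 0) + (0, Dh a) + (0, b) := by
    simp
  simp only [pairFun, ContinuousLinearMap.coprod_apply, ContinuousLinearMap.add_apply,
    ContinuousLinearMap.comp_apply, ContinuousLinearMap.inl_apply,
    ContinuousLinearMap.inr_apply, shiftMap, ContinuousLinearMap.prod_apply]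
  show p (a, 0) + p (0, Dh a) + p (0, b) = p (a, Dh a + b)
  rw [hsplit, map_add, map_add]

lemma comp_shiftMap_comp_neg (p : (E × Y) →L[ℝ] ℝ) (Dh : E →L[ℝ] Y) :
    (p.comp (shiftMap Dh)).comp (shiftMap (-Dh)) = p := by
  apply ContinuousLinearMap.ext
  rintro ⟨a, b⟩
  simp only [ContinuousLinearMap.comp_apply, shiftMap_apply, ContinuousLinearMap.neg_apply]
  congr 1
  simp

lemma continuous_comp_shiftMap (M : (E × Y) →L[ℝ] (E × Y)) :
    Continuous fun q : (E × Y) →L[ℝ] ℝ => q.comp M :=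
  (((ContinuousLinearMap.compSL (E × Y) (E × Y) ℝ (RingHom.id ℝ) (RingHom.id ℝ))).flip
    M).continuous

set_option maxHeartbeats 1000000 in
lemma forward_incl [FiniteDimensional ℝ E] [FiniteDimensional ℝ Y]
    {G : Set (E × Y)} {h : E → Y} {u : E} {v : Y}
    (hGcl : ∃ r > 0, IsClosed (G ∩ Metric.closedBall ((u, v - h u) : E × Y) r))
    (hlip : LipschitzAround h u) {Dh : E →L[ℝ] Y} (hDh : HasStrictFDerivAt h Dh u)
    {p : (E × Y) →L[ℝ] ℝ} (hp : p ∈ limitingNC (sumGraph G h) (u, v)) :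
    p.comp (shiftMap Dh) ∈ limitingNC G (u, v - h u) := by
  obtain ⟨zs, ps, hzst, hpst, hfr⟩ := hp
  have hzmem : ∀ i, zs i ∈ sumGraph G h := fun i => (hfr i).1
  set ws : ℕ → E × Y := fun i => ((zs i).1, (zs i).2 - h (zs i).1) with hws
  have hwmem : ∀ i, ws i ∈ G := fun i => hzmem i
  obtain ⟨K, U, hU, hK⟩ := hlip
  have hcontu : ContinuousAt h u := hK.continuousOn.continuousAt hU
  have hz1 : Tendsto (fun i => (zs i).1) atTop (𝓝 u) :=
    (continuous_fst.tendsto _).comp hzst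
  have hz2 : Tendsto (fun i => (zs i).2) atTop (𝓝 v) :=
    (continuous_snd.tendsto _).comp hzst
  have hwt : Tendsto ws atTop (𝓝 (u, v - h u)) :=
    hz1.prodMk_nhds (hz2.sub (hcontu.tendsto.comp hz1))
  set qs : ℕ → (E × Y) →L[ℝ] ℝ := fun i => (ps i).comp (shiftMap Dh) with hqs
  have hqt : Tendsto qs atTop (𝓝 (p.comp (shiftMap Dh))) :=
    ((continuous_comp_shiftMap (shiftMap Dh)).tendsto p).comp hpst
  apply mem_limitingNC_of_eps hGcl hwmem hwt hqt
  intro δ hδ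
  set Cp : ℝ := ‖p‖ + 1 with hCpdef
  have hCp : 0 < Cp := by positivity
  set δ' : ℝ := δ / (2 * Cp) with hδ'def
  have hδ' : 0 < δ' := by positivity
  obtain ⟨ρ, hρ, hρ'⟩ := Metric.eventually_nhds_iff_ball.mp (hDh.isLittleO.def hδ')
  have hE1 : ∀ᶠ i in atTop, dist ((zs i).1) u < ρ / 2 := by
    obtain ⟨N, hN⟩ := (Metric.tendsto_atTop.mp hz1) (ρ / 2) (by positivity)
    exact eventually_atTop.mpr ⟨N, fun i hi => hN i hi⟩
  have hE2 : ∀ᶠ i in atTop, ‖ps i‖ ≤ Cp := by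
    obtain ⟨N, hN⟩ := (Metric.tendsto_atTop.mp hpst) 1 one_pos
    refine eventually_atTop.mpr ⟨N, fun i hi => ?_⟩
    have h1 : ‖ps i - p‖ < 1 := by rw [← dist_eq_norm]; exact hN i hi
    calc ‖ps i‖ = ‖(ps i - p) + p‖ := by rw [sub_add_cancel]
      _ ≤ ‖ps i - p‖ + ‖p‖ := norm_add_le _ _
      _ ≤ Cp := by rw [hCpdef]; linarith
  filter_upwards [hE1, hE2] with i hi1 hi2
  have core : ∀ w' ∈ tangentConeB G (ws i), ‖w'‖ ≤ 1 → qs i w' ≤ δ := by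
    rintro ⟨a, b⟩ hw' hn1
    obtain ⟨t, c, htp, ht0, hct, hcm⟩ := hw'
    set x₀ : E := (zs i).1 with hx₀
    set y₀ : Y := (zs i).2 with hy₀
    set e : ℕ → Y := fun j => (t j)⁻¹ • (h (x₀ + t j • (c j).1) - h x₀) - Dh ((c j).1)
      with hedef
    set c' : ℕ → E × Y := fun j => ((c j).1, (c j).2 + Dh ((c j).1) + e j) with hc'def
    have hmem' : ∀ j, zs i + t j • c' j ∈ sumGraph G h := by
      intro j
      show ((zs i + t j • c' j).1, (zs i + t j • c' j).2 - h ((zs i + t j • c' j).1)) ∈ G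
      have h1 : (zs i + t j • c' j).1 = x₀ + t j • (c j).1 := rfl
      have h2 : (zs i + t j • c' j).2 = y₀ + t j • ((c j).2 + Dh ((c j).1) + e j) := rfl
      rw [h1, h2]
      have ht' : t j • e j
          = (h (x₀ + t j • (c j).1) - h x₀) - t j • Dh ((c j).1) := by
        rw [hedef]
        simp only [smul_sub, smul_smul, mul_inv_cancel₀ (htp j).ne', one_smul]
      have hy : y₀ + t j • ((c j).2 + Dh ((c j).1) + e j) - h (x₀ + t j • (c j).1)
          = (y₀ - h x₀) + t j • (c j).2 := by
        rw [smul_add, smul_add, ht']; abel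
      rw [hy]
      exact hcm j
    have hct1 : Tendsto (fun j => (c j).1) atTop (𝓝 a) :=
      (continuous_fst.tendsto _).comp hct
    have hct2 : Tendsto (fun j => (c j).2) atTop (𝓝 b) :=
      (continuous_snd.tendsto _).comp hct
    have ha1 : ‖a‖ ≤ 1 := le_trans (norm_fst_le (⟨a, b⟩ : E × Y)) hn1
    have hevj1 : ∀ᶠ j in atTop, ‖(c j).1‖ ≤ 2 :=
      hct1.norm.eventually (eventually_le_nhds (lt_of_le_of_lt ha1 one_lt_two))
    have hevj2 : ∀ᶠ j in atTop, ‖t j • (c j).1‖ < ρ / 2 := by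
      have hsm : Tendsto (fun j => ‖t j • (c j).1‖) atTop (𝓝 0) := by
        have : Tendsto (fun j => t j • (c j).1) atTop (𝓝 ((0:ℝ) • a)) := ht0.smul hct1
        rw [zero_smul] at this
        simpa using this.norm
      exact hsm.eventually (eventually_lt_nhds (by positivity))
    have hevj : ∀ᶠ j in atTop, ‖e j‖ ≤ 2 * δ' := by
      filter_upwards [hevj1, hevj2] with j h1 h2
      set xj : E := x₀ + t j • (c j).1 with hxj
      have hdx : dist xj x₀ = ‖t j • (c j).1‖ := by
        rw [dist_eq_norm, hxj, add_sub_cancel_left]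
      have hxjb : dist xj u < ρ := by
        calc dist xj u ≤ dist xj x₀ + dist x₀ u := dist_triangle _ _ _
          _ < ρ / 2 + ρ / 2 := add_lt_add (hdx ▸ h2) hi1
          _ = ρ := by ring
      have hx₀b : dist x₀ u < ρ := lt_of_lt_of_le hi1 (by linarith)
      have hpair : ((xj, x₀) : E × E) ∈ Metric.ball ((u, u) : E × E) ρ := by
        rw [Metric.mem_ball, Prod.dist_eq]
        exact max_lt hxjb hx₀b
      have hest := hρ' _ hpair
      simp only at hest
      have hee : e j = (t j)⁻¹ • (h xj - h x₀ - Dh (xj - x₀)) := by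
        rw [hedef]
        have hxx : xj - x₀ = t j • (c j).1 := by rw [hxj, add_sub_cancel_left]
        rw [hxx, map_smul, smul_sub, inv_smul_smul₀ (htp j).ne']
      have hnxx : ‖xj - x₀‖ = t j * ‖(c j).1‖ := by
        rw [show xj - x₀ = t j • (c j).1 by rw [hxj, add_sub_cancel_left], norm_smul,
          Real.norm_eq_abs, abs_of_pos (htp j)]
      rw [hee, norm_smul, Real.norm_eq_abs, abs_of_pos (inv_pos.mpr (htp j))]
      calc (t j)⁻¹ * ‖h xj - h x₀ - Dh (xj - x₀)‖
          ≤ (t j)⁻¹ * (δ' * ‖xj - x₀‖) :=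
            mul_le_mul_of_nonneg_left hest (inv_pos.mpr (htp j)).le
        _ = (t j)⁻¹ * t j * (δ' * ‖(c j).1‖) := by rw [hnxx]; ring
        _ = δ' * ‖(c j).1‖ := by rw [inv_mul_cancel₀ (htp j).ne', one_mul]
        _ ≤ δ' * 2 := mul_le_mul_of_nonneg_left h1 hδ'.le
        _ = 2 * δ' := by ring
    obtain ⟨J, hJ⟩ := eventually_atTop.mp hevj
    have hshift : ∀ k, e (J + k) ∈ Metric.closedBall (0:Y) (2 * δ') := by
      intro k
      rw [Metric.mem_closedBall, dist_zero_right]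
      exact hJ _ (Nat.le_add_right _ _)
    obtain ⟨eb, hebmem, φ, hφ, hebt⟩ :=
      (isCompact_closedBall (0:Y) (2 * δ')).tendsto_subseq hshift
    set σ : ℕ → ℕ := fun k => J + φ k with hσdef
    have hσ : StrictMono σ := fun m n hmn => Nat.add_lt_add_left (hφ hmn) J
    have hσtop : Tendsto σ atTop atTop := hσ.tendsto_atTop
    have htan : ((a, b + Dh a + eb) : E × Y) ∈ tangentConeB (sumGraph G h) (zs i) := by
      refine ⟨t ∘ σ, c' ∘ σ, fun k => htp _, ht0.comp hσtop, ?_, fun k => hmem' _⟩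
      apply Tendsto.prodMk_nhds
      · exact hct1.comp hσtop
      · refine Tendsto.add (Tendsto.add (hct2.comp hσtop)
          ((Dh.continuous.tendsto a).comp (hct1.comp hσtop))) ?_
        exact hebt
    have hps0 := (hfr i).2 _ htan
    have hsplit : ((a, Dh a + b) : E × Y) = (a, b + Dh a + eb) - (0, eb) := by
      rw [Prod.ext_iff]
      constructor
      · simp
      · simp only [Prod.snd_sub]
        abel
    have happ : qs i (⟨a, b⟩ : E × Y) = ps i (a, Dh a + b) := rfl
    have hebn : ‖eb‖ ≤ 2 * δ' := by
      rw [← dist_zero_right]; exact Metric.mem_closedBall.mp hebmem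
    have hnorm0eb : ‖((0, eb) : E × Y)‖ = ‖eb‖ := by
      rw [Prod.norm_def]
      simp
    calc qs i (⟨a, b⟩ : E × Y) = ps i (a, b + Dh a + eb) - ps i (0, eb) := by
          rw [happ, hsplit, map_sub]
      _ ≤ 0 - ps i (0, eb) := by linarith [hps0]
      _ ≤ ‖ps i (0, eb)‖ := by
          rw [zero_sub]
          exact (neg_le_abs _).trans (le_of_eq (Real.norm_eq_abs _).symm)
      _ ≤ ‖ps i‖ * ‖((0, eb) : E × Y)‖ := (ps i).le_opNorm _
      _ ≤ Cp * ‖eb‖ := by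
          rw [hnorm0eb]
          exact mul_le_mul_of_nonneg_right hi2 (norm_nonneg _)
      _ ≤ Cp * (2 * δ') := mul_le_mul_of_nonneg_left hebn hCp.le
      _ = δ := by rw [hδ'def]; field_simp
  intro w hw
  rcases eq_or_ne w 0 with rfl | hw0
  · simp
  · have hwn : (0:ℝ) < ‖w‖ := norm_pos_iff.mpr hw0
    have hs : (0:ℝ) < ‖w‖⁻¹ := inv_pos.mpr hwn
    have hwm : ‖w‖⁻¹ • w ∈ tangentConeB G (ws i) := tangentConeB_smul hs hw
    have hn1 : ‖‖w‖⁻¹ • w‖ ≤ 1 := by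
      rw [norm_smul, Real.norm_eq_abs, abs_of_pos hs, inv_mul_cancel₀ hwn.ne']
    have hcore := core _ hwm hn1
    have hscale : qs i w = ‖w‖ * qs i (‖w‖⁻¹ • w) := by
      rw [map_smul, smul_eq_mul, ← mul_assoc, mul_inv_cancel₀ hwn.ne', one_mul]
    rw [hscale]
    calc ‖w‖ * qs i (‖w‖⁻¹ • w) ≤ ‖w‖ * δ := mul_le_mul_of_nonneg_left hcore hwn.le
      _ = δ * ‖w‖ := mul_comm _ _

end Main
lemma sumGraph_neg (G : Set (E × Y)) (h : E → Y) :
    sumGraph (sumGraph G h) (fun x => -h x) = G := by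
  ext z
  show ((z.1, z.2 - -h z.1) : E × Y) ∈ sumGraph G h ↔ z ∈ G
  show ((z.1, (z.2 - -h z.1) - h z.1) : E × Y) ∈ G ↔ z ∈ G
  have : (z.2 - -h z.1) - h z.1 = z.2 := by abel
  rw [this]

lemma LipschitzAround.neg' {h : E → Y} {u : E} (hl : LipschitzAround h u) :
    LipschitzAround (fun x => -h x) u := by
  obtain ⟨K, U, hU, hK⟩ := hl
  exact ⟨K, U, hU, hK.neg⟩

lemma sumGraph_locallyClosed {G : Set (E × Y)} {h : E → Y} {u : E}
    (hG : IsClosed G) (hlip : LipschitzAround h u) (v : Y) :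
    ∃ r > 0, IsClosed (sumGraph G h ∩ Metric.closedBall ((u, v) : E × Y) r) := by
  obtain ⟨K, U, hU, hK⟩ := hlip
  obtain ⟨ε, hε, hball⟩ := Metric.mem_nhds_iff.mp hU
  refine ⟨ε / 2, by positivity, ?_⟩
  have hsubU : Metric.closedBall u (ε / 2) ⊆ U :=
    (Metric.closedBall_subset_ball (by linarith)).trans hball
  have hcb : Metric.closedBall ((u, v) : E × Y) (ε / 2)
      = Metric.closedBall u (ε / 2) ×ˢ Metric.closedBall v (ε / 2) :=
    (closedBall_prod_same _ _ _).symm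
  have hconth : ContinuousOn h U := hK.continuousOn
  have hcontΦ : ContinuousOn (fun z : E × Y => ((z.1, z.2 - h z.1) : E × Y))
      (Metric.closedBall ((u, v) : E × Y) (ε / 2)) := by
    apply ContinuousOn.prodMk
    · exact continuous_fst.continuousOn
    · apply ContinuousOn.sub continuous_snd.continuousOn
      apply ContinuousOn.comp hconth continuous_fst.continuousOn
      intro z hz
      rw [hcb, Set.mem_prod] at hz
      exact hsubU hz.1
  have hclosed := hcontΦ.preimage_isClosed_of_isClosed Metric.isClosed_closedBall hG
  have hset : sumGraph G h ∩ Metric.closedBall ((u, v) : E × Y) (ε / 2)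
      = Metric.closedBall ((u, v) : E × Y) (ε / 2)
        ∩ (fun z : E × Y => ((z.1, z.2 - h z.1) : E × Y)) ⁻¹' G := by
    ext z
    constructor
    · rintro ⟨h1, h2⟩; exact ⟨h2, h1⟩
    · rintro ⟨h1, h2⟩; exact ⟨h2, h1⟩
  rw [hset]
  exact hclosed
/-- for `h` strictly differentiable at `u`, the limiting normal cone
to the graph of `h + F` is exactly described via `∇h(u)ᵀ`. -/
theorem statement7 [FiniteDimensional ℝ E] [FiniteDimensional ℝ Y]
    (G : Set (E × Y)) (hG : IsClosed G) (h : E → Y) (u : E) (v : Y)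
    (hlip : LipschitzAround h u) (Dh : E →L[ℝ] Y)
    (hDh : HasStrictFDerivAt h Dh u) (huv : (u, v) ∈ sumGraph G h) :
    limitingNC (sumGraph G h) (u, v) =
      {p : (E × Y) →L[ℝ] ℝ |
        pairFun (p.comp (ContinuousLinearMap.inl ℝ E Y) +
            (p.comp (ContinuousLinearMap.inr ℝ E Y)).comp Dh)
          (p.comp (ContinuousLinearMap.inr ℝ E Y)) ∈
        limitingNC G (u, v - h u)} := by
  ext p
  constructor
  · intro hp
    have hGcl : ∃ r > 0, IsClosed (G ∩ Metric.closedBall ((u, v - h u) : E × Y) r) :=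
      ⟨1, one_pos, hG.inter Metric.isClosed_closedBall⟩
    have hfwd := forward_incl hGcl hlip hDh hp
    show pairFun (p.comp (ContinuousLinearMap.inl ℝ E Y) +
        (p.comp (ContinuousLinearMap.inr ℝ E Y)).comp Dh)
      (p.comp (ContinuousLinearMap.inr ℝ E Y)) ∈ limitingNC G (u, v - h u)
    rw [pairFun_eq_comp]
    exact hfwd
  · intro hp
    have hp' : p.comp (shiftMap Dh) ∈ limitingNC G (u, v - h u) := by
      have hmem : pairFun (p.comp (ContinuousLinearMap.inl ℝ E Y) +
          (p.comp (ContinuousLinearMap.inr ℝ E Y)).comp Dh)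
          (p.comp (ContinuousLinearMap.inr ℝ E Y)) ∈ limitingNC G (u, v - h u) := hp
      rwa [pairFun_eq_comp] at hmem
    have hneg : sumGraph (sumGraph G h) (fun x => -h x) = G := sumGraph_neg G h
    have hlip' : LipschitzAround (fun x => -h x) u := hlip.neg'
    have hDh' : HasStrictFDerivAt (fun x => -h x) (-Dh) u := hDh.neg
    have hGcl' : ∃ r > 0, IsClosed (sumGraph G h ∩
        Metric.closedBall ((u, (v - h u) - (fun x => -h x) u) : E × Y) r) := by
      have hvpt : (v - h u) - (fun x => -h x) u = v := by
        show (v - h u) - -h u = v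
        abel
      rw [hvpt]
      exact sumGraph_locallyClosed hG hlip v
    have hp'' : p.comp (shiftMap Dh) ∈
        limitingNC (sumGraph (sumGraph G h) (fun x => -h x)) (u, v - h u) := by
      rw [hneg]; exact hp'
    have hfin := forward_incl (G := sumGraph G h) (h := fun x => -h x) (u := u)
      (v := v - h u) hGcl' hlip' hDh' hp''
    rw [comp_shiftMap_comp_neg] at hfin
    have hvpt : ((u, (v - h u) - (fun x => -h x) u) : E × Y) = (u, v) := by
      show ((u, (v - h u) - -h u) : E × Y) = (u, v)
      have : (v - h u) - -h u = v := by abel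
      rw [this]
    rwa [hvpt] at hfin

end
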